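/- Let F be an admissible entropy function, let ET_∞ denote the Entropy-Transport cost induced by F and the cost c_∞(x₁,x₂) = 0 if x₁ = x₂ and +∞ otherwise. Fix N > 1 and let C = max{F(1/N)/(1−1/N), F(N)/(N−1)}. Then for any finite measure μ on a Polish space X and any M with 1/N < M < N, one has ET_∞(μ, Mμ) ≤ C·μ(X)·|M−1|. -/

import Mathlib

open MeasureTheory ENNReal NNReal Filter Topology
open scoped Classical

/-- The `F`-divergence with recession constant `Finf`. -/
noncomputable def Fdiv {X : Type*} [MeasurableSpace X] (F : ℝ≥0∞ → ℝ≥0∞) (Finf : ℝ≥0∞)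
    (γ μ : Measure X) : ℝ≥0∞ :=
  (∫⁻ x, F (γ.rnDeriv μ x) ∂μ) + Finf * (γ.singularPart μ) Set.univ

/-- The Entropy-Transport cost induced by entropy `F` (recession constant `Finf`) and
cost function `c`. -/
noncomputable def ETCost {X : Type*} [MeasurableSpace X]
    (F : ℝ≥0∞ → ℝ≥0∞) (Finf : ℝ≥0∞) (c : X → X → ℝ≥0∞)
    (μ₁ μ₂ : Measure X) : ℝ≥0∞ :=
  ⨅ (γ : Measure (X × X)) (_ : IsFiniteMeasure γ),
    Fdiv F Finf (γ.map Prod.fst) μ₁ + Fdiv F Finf (γ.map Prod.snd) μ₂ +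
      ∫⁻ q, c q.1 q.2 ∂γ

/-- The pure-entropy cost: `0` on the diagonal and `+∞` off it. -/
noncomputable def pureCost (X : Type*) : X → X → ℝ≥0∞ :=
  fun x y => if x = y then 0 else ⊤

section Aux

open MeasureTheory

/-- Key convexity estimate: `F (ofReal M) ≤ C * ofReal |M-1|`. -/
lemma F_ofReal_bound (F : ℝ≥0∞ → ℝ≥0∞)
    (hFconv : ∀ x y t : ℝ≥0∞, t ≤ 1 → F (t * x + (1 - t) * y) ≤ t * F x + (1 - t) * F y)
    (hF1 : F 1 = 0)
    (N : ℝ) (hN : 1 < N) (M : ℝ) (hM₁ : 1 / N < M) (hM₂ : M < N) :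
    F (ENNReal.ofReal M) ≤
      max (F (ENNReal.ofReal (1 / N)) / ENNReal.ofReal (1 - 1 / N))
          (F (ENNReal.ofReal N) / ENNReal.ofReal (N - 1)) * ENNReal.ofReal |M - 1| := by
  have hN0 : (0:ℝ) < N := by linarith
  rcases le_or_gt 1 M with hM | hM
  · -- M ≥ 1, use F(M) ≤ t F(N) with t = (M-1)/(N-1)
    have hNM : (0:ℝ) < N - 1 := by linarith
    set t : ℝ≥0∞ := ENNReal.ofReal ((M - 1) / (N - 1)) with ht
    have ht1 : t ≤ 1 := by
      rw [ht, ← ENNReal.ofReal_one]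
      exact ENNReal.ofReal_le_ofReal (by rw [div_le_one hNM]; linarith)
    have h1t : 1 - t = ENNReal.ofReal ((N - M) / (N - 1)) := by
      rw [ht, ← ENNReal.ofReal_one, ← ENNReal.ofReal_sub _ (div_nonneg (by linarith) (by linarith))]
      congr 1
      field_simp
      ring
    have hrepr : t * ENNReal.ofReal N + (1 - t) * 1 = ENNReal.ofReal M := by
      rw [h1t, ht, mul_one, ← ENNReal.ofReal_mul (div_nonneg (by linarith) (by linarith)),
        ← ENNReal.ofReal_add (mul_nonneg (div_nonneg (by linarith) (by linarith)) (by linarith)) (div_nonneg (by linarith) (by linarith))]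
      congr 1
      rw [div_mul_eq_mul_div, ← add_div, div_eq_iff (ne_of_gt hNM)]
      ring
    calc F (ENNReal.ofReal M) ≤ t * F (ENNReal.ofReal N) + (1 - t) * F 1 := by
          rw [← hrepr]; exact hFconv _ _ _ ht1
      _ = t * F (ENNReal.ofReal N) := by rw [hF1, mul_zero, add_zero]
      _ = ENNReal.ofReal (M - 1) / ENNReal.ofReal (N - 1) * F (ENNReal.ofReal N) := by
          rw [ht, ENNReal.ofReal_div_of_pos hNM]
      _ = F (ENNReal.ofReal N) / ENNReal.ofReal (N - 1) * ENNReal.ofReal (M - 1) := by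
          simp only [div_eq_mul_inv]; ring
      _ ≤ max (F (ENNReal.ofReal (1 / N)) / ENNReal.ofReal (1 - 1 / N))
            (F (ENNReal.ofReal N) / ENNReal.ofReal (N - 1)) * ENNReal.ofReal |M - 1| := by
          rw [abs_of_nonneg (by linarith)]
          exact mul_le_mul_left (le_max_right _ _) _
  · -- M < 1, use F(M) ≤ t F(1/N) with t = (1-M)/(1-1/N)
    have hNinv : (0:ℝ) < 1 - 1 / N := by
      have : 1 / N < 1 := by rw [div_lt_one hN0]; linarith
      linarith
    have hMpos : (0:ℝ) < M := lt_trans (by positivity) hM₁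
    set t : ℝ≥0∞ := ENNReal.ofReal ((1 - M) / (1 - 1 / N)) with ht
    have ht1 : t ≤ 1 := by
      rw [ht, ← ENNReal.ofReal_one]
      exact ENNReal.ofReal_le_ofReal (by rw [div_le_one hNinv]; linarith)
    have h1t : 1 - t = ENNReal.ofReal ((M - 1 / N) / (1 - 1 / N)) := by
      rw [ht, ← ENNReal.ofReal_one, ← ENNReal.ofReal_sub _ (div_nonneg (by linarith) (by linarith))]
      congr 1
      rw [eq_div_iff (ne_of_gt hNinv), sub_mul, one_mul,
        div_mul_cancel₀ _ (ne_of_gt hNinv)]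
      ring
    have hrepr : t * ENNReal.ofReal (1 / N) + (1 - t) * 1 = ENNReal.ofReal M := by
      rw [h1t, ht, mul_one, ← ENNReal.ofReal_mul (div_nonneg (by linarith) (by linarith)),
        ← ENNReal.ofReal_add (mul_nonneg (div_nonneg (by linarith) (by linarith)) (by positivity)) (div_nonneg (by linarith) (by linarith))]
      congr 1
      rw [div_mul_eq_mul_div, ← add_div, div_eq_iff (ne_of_gt hNinv)]
      ring
    calc F (ENNReal.ofReal M) ≤ t * F (ENNReal.ofReal (1 / N)) + (1 - t) * F 1 := by
          rw [← hrepr]; exact hFconv _ _ _ ht1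
      _ = t * F (ENNReal.ofReal (1 / N)) := by rw [hF1, mul_zero, add_zero]
      _ = ENNReal.ofReal (1 - M) / ENNReal.ofReal (1 - 1 / N) * F (ENNReal.ofReal (1 / N)) := by
          rw [ht, ENNReal.ofReal_div_of_pos hNinv]
      _ = F (ENNReal.ofReal (1 / N)) / ENNReal.ofReal (1 - 1 / N) * ENNReal.ofReal (1 - M) := by
          simp only [div_eq_mul_inv]; ring
      _ ≤ max (F (ENNReal.ofReal (1 / N)) / ENNReal.ofReal (1 - 1 / N))
            (F (ENNReal.ofReal N) / ENNReal.ofReal (N - 1)) * ENNReal.ofReal |M - 1| := by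
          rw [abs_of_nonpos (by linarith), neg_sub]
          exact mul_le_mul_left (le_max_left _ _) _

end Aux

/-- Let `F` be an admissible entropy function and `ET_∞` the
Entropy-Transport cost induced by `F` and the pure-entropy cost `c_∞`. Fix `N > 1` and
`C = max{F(1/N)/(1−1/N), F(N)/(N−1)}`. Then for any finite measure `μ` on a Polish space
and any `M` with `1/N < M < N`, one has `ET_∞(μ, Mμ) ≤ C·μ(X)·|M−1|`. -/
theorem pureEntropy_scaling_bound
    {X : Type*} [TopologicalSpace X] [PolishSpace X] [MeasurableSpace X] [BorelSpace X]
    (F : ℝ≥0∞ → ℝ≥0∞) (Finf : ℝ≥0∞)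
    (hFconv : ∀ x y t : ℝ≥0∞, t ≤ 1 → F (t * x + (1 - t) * y) ≤ t * F x + (1 - t) * F y)
    (hFlsc : LowerSemicontinuous F)
    (hF1 : F 1 = 0)
    (N : ℝ) (hN : 1 < N)
    (μ : Measure X) [IsFiniteMeasure μ]
    (M : ℝ) (hM₁ : 1 / N < M) (hM₂ : M < N) :
    ETCost F Finf (pureCost X) μ (ENNReal.ofReal M • μ) ≤
      max (F (ENNReal.ofReal (1 / N)) / ENNReal.ofReal (1 - 1 / N))
          (F (ENNReal.ofReal N) / ENNReal.ofReal (N - 1)) *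
        μ Set.univ * ENNReal.ofReal |M - 1| := by
  classical
  have hMpos : (0:ℝ) < M := lt_trans (by positivity) hM₁
  set ν : Measure X := ENNReal.ofReal M • μ with hν
  have hνfin : IsFiniteMeasure ν := by
    constructor
    rw [hν]
    simp only [Measure.smul_apply, smul_eq_mul]
    exact ENNReal.mul_lt_top ENNReal.ofReal_lt_top (measure_lt_top μ _)
  set γ : Measure (X × X) := ν.map (fun x => (x, x)) with hγ
  have hdiag : Measurable (fun x : X => (x, x)) := measurable_id.prodMk measurable_id
  have hγfin : IsFiniteMeasure γ := by
    constructor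
    rw [hγ, Measure.map_apply hdiag MeasurableSet.univ]
    exact hνfin.measure_univ_lt_top
  have hfst : γ.map Prod.fst = ν := by
    rw [hγ, Measure.map_map measurable_fst hdiag]
    exact Measure.map_id
  have hsnd : γ.map Prod.snd = ν := by
    rw [hγ, Measure.map_map measurable_snd hdiag]
    exact Measure.map_id
  have key : Fdiv F Finf (γ.map Prod.fst) μ + Fdiv F Finf (γ.map Prod.snd) ν +
      ∫⁻ q, pureCost X q.1 q.2 ∂γ = F (ENNReal.ofReal M) * μ Set.univ := by
    have h1 : Fdiv F Finf (γ.map Prod.fst) μ = F (ENNReal.ofReal M) * μ Set.univ := by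
      rw [hfst, Fdiv, hν, Measure.singularPart_eq_zero_of_ac Measure.smul_absolutelyContinuous]
      have hrn : (ENNReal.ofReal M • μ).rnDeriv μ =ᵐ[μ] fun _ => ENNReal.ofReal M := by
        filter_upwards [Measure.rnDeriv_smul_left_of_ne_top μ μ ENNReal.ofReal_ne_top,
          Measure.rnDeriv_self μ] with x h h'
        rw [h, Pi.smul_apply, h', smul_eq_mul, mul_one]
      rw [lintegral_congr_ae (hrn.mono fun x h => by rw [h])]
      simp
    have h2 : Fdiv F Finf (γ.map Prod.snd) ν = 0 := by
      rw [hsnd, Fdiv, Measure.singularPart_self]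
      rw [lintegral_congr_ae ((Measure.rnDeriv_self ν).mono fun x h => by rw [h])]
      simp [hF1]
    have h3 : ∫⁻ q, pureCost X q.1 q.2 ∂γ = 0 := by
      rw [hγ, lintegral_map (by
        apply Measurable.ite _ measurable_const measurable_const
        exact (isClosed_diagonal.measurableSet : MeasurableSet {p : X × X | p.1 = p.2}))
        hdiag]
      simp [pureCost]
    rw [h1, h2, h3, add_zero, add_zero]
  have hle : ETCost F Finf (pureCost X) μ ν ≤ F (ENNReal.ofReal M) * μ Set.univ := by
    rw [ETCost, ← key]
    exact iInf_le_of_le γ (iInf_le_of_le hγfin le_rfl)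
  refine le_trans hle ?_
  calc F (ENNReal.ofReal M) * μ Set.univ
      ≤ (max (F (ENNReal.ofReal (1 / N)) / ENNReal.ofReal (1 - 1 / N))
          (F (ENNReal.ofReal N) / ENNReal.ofReal (N - 1)) * ENNReal.ofReal |M - 1|) *
          μ Set.univ :=
        mul_le_mul_left (F_ofReal_bound F hFconv hF1 N hN M hM₁ hM₂) _
    _ = _ := by ring
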